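/- arXiv:2008.13500 — 2 statements merged into one kernel-verified Lean document; each statement's English description precedes it below -/
import Mathlib

section
/- For a p-adic measure μ on ℤ_p with values in W and any integer m ≥ 0, the power series attached to the measure x^m·μ (defined by ∫ φ d(x^m μ) = ∫ φ(x) x^m dμ) equals θ^m Φ_μ, where θ = t·d/dt is the differential operator on W[[t-1]]; that is, Φ_{x^m μ}(t) = (t d/dt)^m Φ_μ(t). -/
/-!
STATEMENT 2: For a p-adic measure μ on ℤ_p with values in W and m ≥ 0, the Amice
transform of the measure x^m·μ equals θ^m Φ_μ, where θ = t·d/dt acts on W[[T]]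
(T = t - 1) by θF = (1+T)·dF/dT.
-/

open PadicInt PowerSeries

/-- Binomial coefficient function as a continuous map with values in `W`. -/
noncomputable def binomMap (p : ℕ) [Fact p.Prime] (W : Type*) [NormedCommRing W]
    [Algebra ℤ_[p] W] (hca : Continuous (algebraMap ℤ_[p] W)) (n : ℕ) : C(ℤ_[p], W) :=
  (⟨algebraMap ℤ_[p] W, hca⟩ : C(ℤ_[p], W)).comp
    ⟨fun x => Ring.choose x n, PadicInt.continuous_choose n⟩

/-- The Amice transform `Φ_μ` of a measure: its `n`-th coefficient (in `T = t-1`) is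
`∫ binom(x,n) dμ`. -/
noncomputable def amice (p : ℕ) [Fact p.Prime] (W : Type*) [NormedCommRing W]
    [Algebra ℤ_[p] W] (hca : Continuous (algebraMap ℤ_[p] W))
    (μ : C(ℤ_[p], W) →L[W] W) : PowerSeries W :=
  PowerSeries.mk fun n => μ (binomMap p W hca n)

/-- The operator `θ = t·d/dt` on `W[[T]]` with `t = 1 + T`. -/
noncomputable def theta (W : Type*) [CommRing W] (F : PowerSeries W) : PowerSeries W :=
  (1 + PowerSeries.X) * F.derivativeFun

/-- Pascal-type recursion: `x·C(x,n) = (n+1)·C(x,n+1) + n·C(x,n)` in `ℤ_[p]`. -/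
lemma key_choose (p : ℕ) [Fact p.Prime] (x : ℤ_[p]) (n : ℕ) :
    x * Ring.choose x n = (n + 1) • Ring.choose x (n + 1) + n • Ring.choose x n := by
  have hdesc : (descPochhammer ℤ (n+1)).smeval x
      = (descPochhammer ℤ n).smeval x * (x - n) := by
    rw [descPochhammer_succ_right, Polynomial.smeval_mul, Polynomial.smeval_sub,
      Polynomial.smeval_X, Polynomial.smeval_natCast]
    simp [pow_zero, nsmul_eq_mul]
  have h1 : (n+1) • Ring.choose x (n+1) = Ring.choose x n * (x - n) := by
    apply nsmul_right_injective (Nat.factorial_ne_zero n)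
    simp only
    rw [← mul_nsmul', Nat.mul_comm, ← Nat.factorial_succ,
      ← Ring.descPochhammer_eq_factorial_smul_choose,
      hdesc, Ring.descPochhammer_eq_factorial_smul_choose, smul_mul_assoc]
  rw [h1, nsmul_eq_mul]
  ring

lemma key_binomMap (p : ℕ) [Fact p.Prime] (W : Type*) [NormedCommRing W]
    [Algebra ℤ_[p] W] (hca : Continuous (algebraMap ℤ_[p] W)) (n : ℕ) :
    (⟨algebraMap ℤ_[p] W, hca⟩ : C(ℤ_[p], W)) * binomMap p W hca n
      = (n + 1) • binomMap p W hca (n + 1) + n • binomMap p W hca n := by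
  ext x
  simp only [binomMap, ContinuousMap.mul_apply, ContinuousMap.add_apply,
    ContinuousMap.smul_apply, ContinuousMap.comp_apply, ContinuousMap.coe_mk]
  rw [← map_mul, key_choose, map_add, map_nsmul, map_nsmul]

lemma coeff_derivativeFun_old {R : Type*} [CommRing R] (f : PowerSeries R) (n : ℕ) :
    PowerSeries.coeff n f.derivativeFun = PowerSeries.coeff (n + 1) f * (n + 1) :=
  coeff_derivative f n

lemma coeff_theta (W : Type*) [CommRing W] (F : PowerSeries W) (n : ℕ) :
    PowerSeries.coeff n (theta W F)
      = (n + 1) • PowerSeries.coeff (n + 1) F + n • PowerSeries.coeff n F := by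
  rw [theta, add_mul, one_mul, map_add, coeff_derivativeFun_old]
  rcases n with _ | k
  · simp [nsmul_eq_mul, mul_comm]
  · rw [PowerSeries.coeff_succ_X_mul, coeff_derivativeFun_old]
    push_cast
    simp only [nsmul_eq_mul]
    push_cast
    ring

lemma amice_step (p : ℕ) [Fact p.Prime] (W : Type*) [NormedCommRing W]
    [Algebra ℤ_[p] W] (hca : Continuous (algebraMap ℤ_[p] W))
    (μ ν : C(ℤ_[p], W) →L[W] W)
    (h : ∀ φ : C(ℤ_[p], W),
      ν φ = μ ((⟨algebraMap ℤ_[p] W, hca⟩ : C(ℤ_[p], W)) * φ)) :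
    amice p W hca ν = theta W (amice p W hca μ) := by
  ext n
  rw [coeff_theta, amice, amice, coeff_mk, coeff_mk, coeff_mk, h, key_binomMap,
    map_add, map_nsmul, map_nsmul]

theorem statement2 (p : ℕ) [Fact p.Prime] (W : Type*) [NormedCommRing W] [CompleteSpace W]
    [Algebra ℤ_[p] W] (hca : Continuous (algebraMap ℤ_[p] W))
    (m : ℕ) (μ ν : C(ℤ_[p], W) →L[W] W)
    (hν : ∀ φ : C(ℤ_[p], W),
      ν φ = μ ((⟨algebraMap ℤ_[p] W, hca⟩ : C(ℤ_[p], W)) ^ m * φ)) :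
    amice p W hca ν = (theta W)^[m] (amice p W hca μ) := by
  induction m generalizing μ ν with
  | zero =>
      have : ν = μ := by
        ext φ; rw [hν, pow_zero, one_mul]
      rw [this, Function.iterate_zero_apply]
  | succ m ih =>
      set a : C(ℤ_[p], W) := (⟨algebraMap ℤ_[p] W, hca⟩ : C(ℤ_[p], W)) with ha
      let T : C(ℤ_[p], W) →L[W] C(ℤ_[p], W) :=
        { toFun := fun φ => a * φ
          map_add' := mul_add a
          map_smul' := fun c φ => by simp [mul_smul_comm]
          cont := continuous_const.mul continuous_id }
      have hμ' : ∀ φ : C(ℤ_[p], W), ν φ = (μ.comp T) (a ^ m * φ) := by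
        intro φ
        rw [hν]
        show μ (a ^ (m + 1) * φ) = μ (a * (a ^ m * φ))
        rw [← mul_assoc, ← pow_succ']
      have h1 : amice p W hca ν = (theta W)^[m] (amice p W hca (μ.comp T)) := ih _ _ hμ'
      have h2 : amice p W hca (μ.comp T) = theta W (amice p W hca μ) :=
        amice_step p W hca μ (μ.comp T) fun φ => rfl
      rw [h1, h2, ← Function.iterate_succ_apply]
end

section
/- Let F ∈ W[[t-1]] be a power series whose associated measure is supported on ℤ_p^×, and let j be a negative integer. Then the limit θ^j F := lim_{i→∞} θ^{j+(p-1)p^i} F exists in W[[t-1]] with respect to the p-adic topology, where θ = t·d/dt. -/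
/-!
STATEMENT 5: Let F ∈ W[[t-1]] be a power series whose associated measure is supported
on ℤ_p^×, and let j < 0 be an integer. Then the limit θ^j F := lim_{i→∞} θ^{j+(p-1)p^i} F
exists in W[[t-1]] for the p-adic topology (i.e. coefficientwise), where θ = t·d/dt.
-/

open PadicInt PowerSeries Filter

section AuxPadic
variable {p : ℕ} [Fact p.Prime]

/-- Recursion for generalized binomial coefficients: `(k+1)C(x,k+1) + kC(x,k) = xC(x,k)`. -/
theorem aux_choose_rec (x : ℤ_[p]) (k : ℕ) :
    (k+1) • Ring.choose x (k+1) + k • Ring.choose x k = x * Ring.choose x k := by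
  refine nsmul_right_injective (M := ℤ_[p]) (n := Nat.factorial (k+1)) (Nat.factorial_ne_zero _) ?_
  have h3 : ((k+1).factorial : ℤ_[p]) * Ring.choose x (k+1)
      = (k.factorial : ℤ_[p]) * Ring.choose x k * (x - k) := by
    have h1 := Ring.descPochhammer_eq_factorial_smul_choose x k
    have h2 := Ring.descPochhammer_eq_factorial_smul_choose x (k+1)
    have h4 : (descPochhammer ℤ (k+1)).smeval x = (descPochhammer ℤ k).smeval x * (x - k) := by
      rw [descPochhammer_succ_right, Polynomial.smeval_mul, Polynomial.smeval_sub,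
        Polynomial.smeval_X, ← Polynomial.C_eq_natCast, Polynomial.smeval_C]
      simp [npow_one]
    rw [h1, h2, nsmul_eq_mul, nsmul_eq_mul] at h4
    exact h4
  have hf : ((k+1).factorial : ℤ_[p]) = (k+1) * k.factorial := by
    rw [Nat.factorial_succ]; push_cast; ring
  simp only [nsmul_eq_mul, smul_eq_mul]
  push_cast
  linear_combination (↑k+1) * h3 + (Ring.choose x k * (↑k - x)) * hf

theorem aux_ker_set (x : ℤ_[p]) : toZMod x = 0 ↔ (p : ℤ_[p]) ∣ x := by
  rw [← RingHom.mem_ker, ker_toZMod, maximalIdeal_eq_span_p, Ideal.mem_span_singleton]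

theorem aux_clopen : IsClopen {x : ℤ_[p] | toZMod x = 0} := by
  constructor
  · have : {x : ℤ_[p] | toZMod x = 0} = {x : ℤ_[p] | ‖x‖ ≤ (p : ℝ) ^ (-(1:ℕ) : ℤ)} := by
      ext x
      rw [Set.mem_setOf_eq, Set.mem_setOf_eq, aux_ker_set,
        norm_le_pow_iff_mem_span_pow, pow_one, Ideal.mem_span_singleton]
    rw [this]
    exact isClosed_le continuous_norm continuous_const
  · have : {x : ℤ_[p] | toZMod x = 0} = {x : ℤ_[p] | ‖x‖ < 1} := by
      ext x
      rw [Set.mem_setOf_eq, Set.mem_setOf_eq, aux_ker_set, norm_lt_one_iff_dvd]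
    rw [this]
    exact isOpen_lt continuous_norm continuous_const

/-- For a `p`-adic unit `x`, `x^((p-1)p^m c)` is `1` modulo `p^(m+1)`. -/
theorem aux_pow_bound (x : ℤ_[p]) (hx : toZMod x ≠ 0) (m c : ℕ) :
    ‖x ^ ((p-1) * p^m * c) - 1‖ ≤ (p : ℝ) ^ (-(m+1 : ℕ) : ℤ) := by
  have h1 : (p : ℤ_[p]) ∣ x ^ (p-1) - 1 := by
    rw [← aux_ker_set]
    have : (toZMod x) ^ (p - 1) = 1 := ZMod.pow_card_sub_one_eq_one hx
    rw [map_sub, map_pow, map_one, this, sub_self]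
  have h2 : (p : ℤ_[p]) ^ (m+1) ∣ x ^ ((p-1) * p^m) - 1 := by
    have := dvd_sub_pow_of_dvd_sub h1 m
    simpa [one_pow, ← pow_mul] using this
  have h3 : (p : ℤ_[p]) ^ (m+1) ∣ x ^ ((p-1) * p^m * c) - 1 := by
    refine h2.trans ?_
    have := sub_dvd_pow_sub_pow (x ^ ((p-1) * p^m)) 1 c
    simpa [one_pow, ← pow_mul] using this
  rw [norm_le_pow_iff_mem_span_pow, Ideal.mem_span_singleton]
  exact h3

end AuxPadic

theorem aux_coeff_derivativeFun {R : Type*} [CommSemiring R] (f : PowerSeries R) (n : ℕ) :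
    PowerSeries.coeff (R := R) n f.derivativeFun = PowerSeries.coeff (R := R) (n + 1) f * (n + 1) :=
  PowerSeries.coeff_derivative f n

/-- Coefficients of `θF`. -/
theorem aux_coeff_theta {W : Type*} [CommRing W] (F : PowerSeries W) (k : ℕ) :
    PowerSeries.coeff (R := W) k (theta W F)
      = (k+1) • PowerSeries.coeff (R := W) (k+1) F + k • PowerSeries.coeff (R := W) k F := by
  rw [theta, add_mul, one_mul, map_add, aux_coeff_derivativeFun]
  cases k with
  | zero => simp
  | succ n =>
      rw [coeff_succ_X_mul, aux_coeff_derivativeFun]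
      simp only [nsmul_eq_mul]
      push_cast
      ring

section Main
variable (p : ℕ) [Fact p.Prime] (W : Type*) [NormedCommRing W] [CompleteSpace W]
    [Algebra ℤ_[p] W] (hca : Continuous (algebraMap ℤ_[p] W))
    (hnorm : ∀ x : ℤ_[p], ‖algebraMap ℤ_[p] W x‖ ≤ ‖x‖)

/-- The continuous map `x ↦ x^N · C(x,k)` (pushed to `W`). -/
noncomputable def pMap (N k : ℕ) : C(ℤ_[p], W) :=
  ⟨fun x => algebraMap ℤ_[p] W (x ^ N * Ring.choose x k),
    hca.comp (((continuous_pow N).mul (PadicInt.continuous_choose k)))⟩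

/-- The restriction of `pMap` to the units. -/
noncomputable def uMap (N k : ℕ) : C(ℤ_[p], W) :=
  ⟨fun x => if toZMod x = 0 then 0 else pMap p W hca N k x, by
    refine Continuous.if ?_ continuous_const (pMap p W hca N k).continuous
    intro a ha
    rw [(aux_clopen (p := p)).frontier_eq] at ha
    exact absurd ha (Set.notMem_empty a)⟩

omit [CompleteSpace W] in
/-- Coefficients of iterates of `θ` applied to `F`. -/
theorem aux_coeff_iterate (μ : C(ℤ_[p], W) →L[W] W) (F : PowerSeries W)
    (hF : ∀ k : ℕ, PowerSeries.coeff (R := W) k F = μ (binomMap p W hca k)) (N : ℕ) :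
    ∀ k : ℕ, PowerSeries.coeff (R := W) k ((theta W)^[N] F) = μ (pMap p W hca N k) := by
  induction N with
  | zero =>
      intro k
      simp only [Function.iterate_zero, id_eq, hF]
      congr 1
      ext x
      simp [pMap, binomMap]
  | succ N ih =>
      intro k
      rw [Function.iterate_succ_apply', aux_coeff_theta, ih, ih,
        ← map_nsmul, ← map_nsmul, ← map_add]
      congr 1
      ext x
      simp only [pMap, ContinuousMap.add_apply, ContinuousMap.coe_smul, ContinuousMap.coe_mk,
        Pi.smul_apply]
      rw [← map_nsmul, ← map_nsmul, ← map_add, ← mul_smul_comm, ← mul_smul_comm, ← mul_add,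
        aux_choose_rec, pow_succ]
      ring_nf

include hnorm in
/-- Convergence of the sequence `uMap (Nn i) k` in `C(ℤ_[p], W)`. -/
theorem aux_uMap_conv (j : ℤ) (k : ℕ) :
    ∃ L : C(ℤ_[p], W), Tendsto (fun i : ℕ =>
      uMap p W hca (j + ((p : ℤ) - 1) * (p : ℤ) ^ i).toNat k) atTop (nhds L) := by
  have hp := (Fact.out : p.Prime)
  set Nn : ℕ → ℕ := fun i => (j + ((p : ℤ) - 1) * (p : ℤ) ^ i).toNat with hNn
  set i0 : ℕ := (-j).toNat with hi0
  have hNge : ∀ i, i0 ≤ i → 0 ≤ j + ((p : ℤ) - 1) * (p : ℤ) ^ i := by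
    intro i hi
    have h1 : (-j : ℤ) ≤ i0 := Int.self_le_toNat _
    have h2 : (i0 : ℤ) < 2 ^ i0 := by exact_mod_cast (Nat.lt_two_pow_self (n := i0))
    have h3 : (2 : ℤ) ^ i0 ≤ 2 ^ i := pow_le_pow_right₀ (by norm_num) hi
    have h4 : (2 : ℤ) ^ i ≤ (p : ℤ) ^ i :=
      pow_le_pow_left₀ (by norm_num) (by exact_mod_cast hp.two_le) i
    have h5 : (1 : ℤ) ≤ (p : ℤ) - 1 := by
      have := hp.two_le; omega
    nlinarith [pow_pos (show (0:ℤ) < p by exact_mod_cast hp.pos) i]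
  have hstep : ∀ i, i0 ≤ i → Nn (i+1) = Nn i + (p-1) * p^i * (p-1) := by
    intro i hi
    have h1 := hNge i hi
    have h2 := hNge (i+1) (le_trans hi (Nat.le_succ i))
    have hc : ((p - 1 : ℕ) : ℤ) = (p : ℤ) - 1 := by
      have := hp.two_le; push_cast [Nat.cast_sub (by omega : 1 ≤ p)]; ring
    have : (Nn (i+1) : ℤ) = (Nn i : ℤ) + ((p-1) * p^i * (p-1) : ℕ) := by
      rw [hNn]
      simp only
      rw [Int.toNat_of_nonneg h2, Int.toNat_of_nonneg h1]
      push_cast [hc]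
      ring
    exact_mod_cast this
  set g : ℕ → C(ℤ_[p], W) := fun m => uMap p W hca (Nn (m + i0)) k with hg
  have hr1 : (p : ℝ)⁻¹ < 1 := by
    rw [inv_lt_one_iff₀]
    right
    exact_mod_cast hp.one_lt
  have hcau : CauchySeq g := by
    refine cauchySeq_of_le_geometric ((p:ℝ)⁻¹) ((p:ℝ) ^ (-(i0+1:ℕ) : ℤ)) hr1 ?_
    intro m
    rw [dist_eq_norm]
    have hCr : (p : ℝ) ^ (-(m + i0 + 1:ℕ) : ℤ) = (p:ℝ) ^ (-(i0+1:ℕ) : ℤ) * ((p:ℝ)⁻¹) ^ m := by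
      have hp0 : (p : ℝ) ≠ 0 := by exact_mod_cast hp.pos.ne'
      rw [inv_pow, ← zpow_natCast (p:ℝ) m, ← zpow_neg, ← zpow_add₀ hp0]
      congr 1
      push_cast
      ring
    rw [← hCr]
    have hpos : (0:ℝ) ≤ (p : ℝ) ^ (-(m + i0 + 1:ℕ) : ℤ) :=
      le_of_lt (zpow_pos (by exact_mod_cast hp.pos) _)
    refine (ContinuousMap.norm_le _ hpos).mpr ?_
    intro x
    by_cases hx : toZMod x = 0
    · simp only [hg, ContinuousMap.sub_apply, uMap, ContinuousMap.coe_mk, hx, if_pos]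
      simpa using hpos
    · simp only [hg, ContinuousMap.sub_apply, uMap, ContinuousMap.coe_mk, hx, if_neg,
        ite_false, pMap]
      have hN : Nn (m + 1 + i0) = Nn (m + i0) + (p-1) * p^(m+i0) * (p-1) := by
        rw [show m + 1 + i0 = (m + i0) + 1 by ring]
        exact hstep (m + i0) (Nat.le_add_left i0 m)
      rw [hN, ← map_sub]
      refine le_trans (hnorm _) ?_
      have : x ^ Nn (m + i0) * Ring.choose x k
            - x ^ (Nn (m + i0) + (p-1) * p^(m+i0) * (p-1)) * Ring.choose x k
          = x ^ Nn (m + i0) * Ring.choose x k * (1 - x ^ ((p-1) * p^(m+i0) * (p-1))) := by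
        rw [pow_add]; ring
      rw [this, norm_mul]
      calc ‖x ^ Nn (m + i0) * Ring.choose x k‖ * ‖1 - x ^ ((p-1) * p^(m+i0) * (p-1))‖
          ≤ 1 * ‖x ^ ((p-1) * p^(m+i0) * (p-1)) - 1‖ := by
            rw [norm_sub_rev]
            exact mul_le_mul_of_nonneg_right (PadicInt.norm_le_one _) (norm_nonneg _)
        _ ≤ (p : ℝ) ^ (-(m + i0 + 1:ℕ) : ℤ) := by
            rw [one_mul]
            exact aux_pow_bound x hx (m + i0) (p-1)
  obtain ⟨L, hL⟩ := cauchySeq_tendsto_of_complete hcau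
  refine ⟨L, ?_⟩
  rw [← tendsto_add_atTop_iff_nat i0]
  exact hL

end Main

theorem statement5 (p : ℕ) [Fact p.Prime] (W : Type*) [NormedCommRing W] [CompleteSpace W]
    [IsUltrametricDist W] [Algebra ℤ_[p] W] (hca : Continuous (algebraMap ℤ_[p] W))
    (hnorm : ∀ x : ℤ_[p], ‖algebraMap ℤ_[p] W x‖ ≤ ‖x‖)
    (μ : C(ℤ_[p], W) →L[W] W)
    -- μ is supported on ℤ_p^× :
    (hsupp : ∀ (φ Ψ : C(ℤ_[p], W)),
      (∀ x : ℤ_[p], Ψ x = if PadicInt.toZMod x = 0 then φ x else 0) → μ Ψ = 0)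
    -- F is the power series associated with μ :
    (F : PowerSeries W)
    (hF : ∀ k : ℕ, PowerSeries.coeff (R := W) k F = μ (binomMap p W hca k))
    (j : ℤ) (hj : j < 0) :
    ∃ G : PowerSeries W, ∀ k : ℕ,
      Tendsto (fun i : ℕ =>
          PowerSeries.coeff (R := W) k ((theta W)^[(j + ((p : ℤ) - 1) * (p : ℤ) ^ i).toNat] F))
        atTop (nhds (PowerSeries.coeff (R := W) k G)) := by
  have key : ∀ k : ℕ, ∃ L : W,
      Tendsto (fun i : ℕ =>
          PowerSeries.coeff (R := W) k ((theta W)^[(j + ((p : ℤ) - 1) * (p : ℤ) ^ i).toNat] F))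
        atTop (nhds L) := by
    intro k
    obtain ⟨L, hL⟩ := aux_uMap_conv p W hca hnorm j k
    refine ⟨μ L, ?_⟩
    have h1 : Tendsto (fun i : ℕ =>
        μ (uMap p W hca (j + ((p : ℤ) - 1) * (p : ℤ) ^ i).toNat k)) atTop (nhds (μ L)) :=
      (μ.continuous.tendsto L).comp hL
    refine h1.congr ?_
    intro i
    set N : ℕ := (j + ((p : ℤ) - 1) * (p : ℤ) ^ i).toNat
    have hμeq : μ (pMap p W hca N k) = μ (uMap p W hca N k) := by
      have hz : μ (pMap p W hca N k - uMap p W hca N k) = 0 := by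
        refine hsupp (pMap p W hca N k) _ ?_
        intro x
        by_cases hx : toZMod x = 0 <;>
          simp [uMap, hx]
      rw [map_sub] at hz
      exact sub_eq_zero.mp hz
    rw [aux_coeff_iterate p W hca μ F hF N k, hμeq]
  choose L hL using key
  exact ⟨PowerSeries.mk L, by simpa [PowerSeries.coeff_mk] using hL⟩
end
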